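/- Let S be a finite set with |S| ≥ 2, fix s₀ ∈ S, let 𝒫 = {B ⊆ S : s₀ ∈ B} and N = 2^{|S|−1}. Let p : S → ℝ with p j ≥ 0 for all j ∈ S, define m(B) = min(p(B), p(S \ B)) with p(T) = Σ_{j ∈ T} p j, and w(A) = (1/(N−1)) · Σ_{B ∈ 𝒫} m(B) − m(A) for A ∈ 𝒫. Then for every A ∈ 𝒫, w(A) ≥ −(1/4) · ((N−2)/(N−1)) · p(S). -/

import Mathlib

theorem stmt_12 {α : Type*} [DecidableEq α] (S : Finset α) (hS : 2 ≤ S.card)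
    (s₀ : α) (hs₀ : s₀ ∈ S) (p : α → ℝ) (hp : ∀ j ∈ S, 0 ≤ p j)
    (P : Finset (Finset α)) (hP : P = S.powerset.filter fun B => s₀ ∈ B)
    (N : ℝ) (hN : N = 2 ^ (S.card - 1))
    (m : Finset α → ℝ) (hm : ∀ B, m B = min (∑ j ∈ B, p j) (∑ j ∈ S \ B, p j))
    (w : Finset α → ℝ)
    (hw : ∀ A, w A = (1 / (N - 1)) * ∑ B ∈ P, m B - m A)
    (A : Finset α) (hA : A ∈ P) :
    w A ≥ -(1 / 4) * ((N - 2) / (N - 1)) * ∑ j ∈ S, p j := by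
  have hAmem := hA
  rw [hP, Finset.mem_filter, Finset.mem_powerset] at hAmem
  obtain ⟨hAS, hs₀A⟩ := hAmem
  have hsubnn : ∀ T : Finset α, T ⊆ S → 0 ≤ ∑ j ∈ T, p j := fun T hT =>
    Finset.sum_nonneg fun j hj => hp j (hT hj)
  set σ : Finset α → Finset α := fun B => (B ∩ A) ∪ ((S \ A) \ B) with hσ
  have hmemσ : ∀ B ∈ P, σ B ∈ P := by
    intro B hB
    rw [hP, Finset.mem_filter, Finset.mem_powerset] at hB ⊢
    constructor
    · intro x hx
      rcases Finset.mem_union.mp hx with h | h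
      · exact hAS (Finset.mem_inter.mp h).2
      · exact (Finset.mem_sdiff.mp (Finset.mem_sdiff.mp h).1).1
    · exact Finset.mem_union_left _ (Finset.mem_inter.mpr ⟨hB.2, hs₀A⟩)
  have hinv : ∀ B ∈ P, σ (σ B) = B := by
    intro B hB
    rw [hP, Finset.mem_filter, Finset.mem_powerset] at hB
    have hBS := hB.1
    ext x
    have hxS : x ∈ B → x ∈ S := fun h => hBS h
    simp only [hσ, Finset.mem_union, Finset.mem_inter, Finset.mem_sdiff, not_or, not_and, not_not]
    tauto
  have key : ∀ B ∈ P, m A ≤ m B + m (σ B) := by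
    intro B hB
    rw [hP, Finset.mem_filter, Finset.mem_powerset] at hB
    have hBS := hB.1
    set a1 := ∑ j ∈ B ∩ A, p j with ha1d
    set a2 := ∑ j ∈ A \ B, p j with ha2d
    set c1 := ∑ j ∈ B \ A, p j with hc1d
    set c2 := ∑ j ∈ (S \ A) \ B, p j with hc2d
    have ha1 : 0 ≤ a1 := hsubnn _ (fun x hx => hBS (Finset.mem_inter.mp hx).1)
    have ha2 : 0 ≤ a2 := hsubnn _ (fun x hx => hAS (Finset.mem_sdiff.mp hx).1)
    have hc1 : 0 ≤ c1 := hsubnn _ (fun x hx => hBS (Finset.mem_sdiff.mp hx).1)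
    have hc2 : 0 ≤ c2 := hsubnn _ (fun x hx => (Finset.mem_sdiff.mp (Finset.mem_sdiff.mp hx).1).1)
    have e1 : ∑ j ∈ B, p j = a1 + c1 := (Finset.sum_inter_add_sum_sdiff B A p).symm
    have hSB : S \ B = (A \ B) ∪ ((S \ A) \ B) := by
      ext x
      simp only [Finset.mem_sdiff, Finset.mem_union]
      constructor
      · intro ⟨hxS, hxB⟩
        by_cases hxA : x ∈ A
        · exact Or.inl ⟨hxA, hxB⟩
        · exact Or.inr ⟨⟨hxS, hxA⟩, hxB⟩
      · rintro (⟨hxA, hxB⟩ | ⟨⟨hxS, _⟩, hxB⟩)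
        · exact ⟨hAS hxA, hxB⟩
        · exact ⟨hxS, hxB⟩
    have hdisj1 : Disjoint (A \ B) ((S \ A) \ B) := by
      rw [Finset.disjoint_left]
      intro x hx hx2
      exact (Finset.mem_sdiff.mp (Finset.mem_sdiff.mp hx2).1).2 (Finset.mem_sdiff.mp hx).1
    have e2 : ∑ j ∈ S \ B, p j = a2 + c2 := by rw [hSB, Finset.sum_union hdisj1]
    have hdisj2 : Disjoint (B ∩ A) ((S \ A) \ B) := by
      rw [Finset.disjoint_left]
      intro x hx hx2
      exact (Finset.mem_sdiff.mp (Finset.mem_sdiff.mp hx2).1).2 (Finset.mem_inter.mp hx).2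
    have e3 : ∑ j ∈ σ B, p j = a1 + c2 := Finset.sum_union hdisj2
    have hSσ : S \ σ B = (A \ B) ∪ (B \ A) := by
      ext x
      have hxSA : x ∈ A → x ∈ S := fun h => hAS h
      have hxSB : x ∈ B → x ∈ S := fun h => hBS h
      simp only [hσ, Finset.mem_union, Finset.mem_inter, Finset.mem_sdiff, not_or, not_and, not_not]
      tauto
    have hdisj3 : Disjoint (A \ B) (B \ A) := by
      rw [Finset.disjoint_left]
      intro x hx hx2
      exact (Finset.mem_sdiff.mp hx).2 (Finset.mem_sdiff.mp hx2).1
    have e4 : ∑ j ∈ S \ σ B, p j = a2 + c1 := by rw [hSσ, Finset.sum_union hdisj3]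
    have e5 : ∑ j ∈ A, p j = a1 + a2 := by
      rw [← Finset.sum_inter_add_sum_sdiff A B p, Finset.inter_comm]
    have hSA : S \ A = (B \ A) ∪ ((S \ A) \ B) := by
      ext x
      simp only [Finset.mem_sdiff, Finset.mem_union]
      constructor
      · intro ⟨hxS, hxA⟩
        by_cases hxB : x ∈ B
        · exact Or.inl ⟨hxB, hxA⟩
        · exact Or.inr ⟨⟨hxS, hxA⟩, hxB⟩
      · rintro (⟨hxB, hxA⟩ | ⟨⟨hxS, hxA⟩, _⟩)
        · exact ⟨hBS hxB, hxA⟩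
        · exact ⟨hxS, hxA⟩
    have hdisj4 : Disjoint (B \ A) ((S \ A) \ B) := by
      rw [Finset.disjoint_left]
      intro x hx hx2
      exact (Finset.mem_sdiff.mp hx2).2 (Finset.mem_sdiff.mp hx).1
    have e6 : ∑ j ∈ S \ A, p j = c1 + c2 := by rw [hSA, Finset.sum_union hdisj4]
    rw [hm, hm, hm, e1, e2, e3, e4, e5, e6]
    rcases min_cases (a1 + c1) (a2 + c2) with ⟨h1, _⟩ | ⟨h1, _⟩ <;>
      rcases min_cases (a1 + c2) (a2 + c1) with ⟨h2, _⟩ | ⟨h2, _⟩ <;>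
      rw [h1, h2] <;>
      [skip; skip; skip; skip] <;>
      first
        | linarith [min_le_left (a1 + a2) (c1 + c2)]
        | linarith [min_le_right (a1 + a2) (c1 + c2)]
  -- sum over P of m ∘ σ equals sum of m
  have hsumσ : ∑ B ∈ P, m (σ B) = ∑ B ∈ P, m B :=
    Finset.sum_nbij' (t := P) (g := m) σ σ hmemσ hmemσ hinv hinv (fun a _ => rfl)
  have hsum2 : (P.card : ℝ) * m A ≤ 2 * ∑ B ∈ P, m B := by
    have h1 : ∑ _B ∈ P, m A ≤ ∑ B ∈ P, (m B + m (σ B)) := Finset.sum_le_sum key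
    rw [Finset.sum_const, Finset.sum_add_distrib, hsumσ, nsmul_eq_mul] at h1
    linarith
  -- cardinality of P
  have hcard : P.card = 2 ^ (S.card - 1) := by
    have hb : P.card = (S.erase s₀).powerset.card := by
      apply Finset.card_nbij' (fun B => B.erase s₀) (fun C => insert s₀ C)
      · intro B hB
        rw [hP, Finset.mem_coe, Finset.mem_filter, Finset.mem_powerset] at hB
        exact Finset.mem_powerset.mpr (Finset.erase_subset_erase _ hB.1)
      · intro C hC
        rw [Finset.mem_coe, Finset.mem_powerset] at hC
        rw [hP, Finset.mem_coe, Finset.mem_filter, Finset.mem_powerset]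
        refine ⟨Finset.insert_subset hs₀ (hC.trans (Finset.erase_subset _ _)), Finset.mem_insert_self _ _⟩
      · intro B hB
        rw [hP, Finset.mem_coe, Finset.mem_filter] at hB
        exact Finset.insert_erase hB.2
      · intro C hC
        rw [Finset.mem_coe, Finset.mem_powerset] at hC
        exact Finset.erase_insert (fun h => (Finset.mem_erase.mp (hC h)).1 rfl)
    rw [hb, Finset.card_powerset, Finset.card_erase_of_mem hs₀]
  have hNP : (P.card : ℝ) = N := by rw [hcard, hN]; push_cast; ring
  have hN2 : 2 ≤ N := by
    rw [hN]
    calc (2:ℝ) = 2 ^ 1 := (pow_one 2).symm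
    _ ≤ 2 ^ (S.card - 1) := pow_le_pow_right₀ (by norm_num) (by omega)
  have hN1 : (0:ℝ) < N - 1 := by linarith
  have hpS : 0 ≤ ∑ j ∈ S, p j := hsubnn S le_rfl
  have hmAnn : 0 ≤ m A := by
    rw [hm]
    exact le_min (hsubnn A hAS) (hsubnn _ (Finset.sdiff_subset))
  have hmAle : m A ≤ (∑ j ∈ S, p j) / 2 := by
    have hsplit : ∑ j ∈ A, p j + ∑ j ∈ S \ A, p j = ∑ j ∈ S, p j := by
      rw [add_comm]; exact Finset.sum_sdiff hAS
    rw [hm]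
    rcases le_total (∑ j ∈ A, p j) (∑ j ∈ S \ A, p j) with h | h
    · rw [min_eq_left h]; linarith
    · rw [min_eq_right h]; linarith
  have hT : N * m A ≤ 2 * ∑ B ∈ P, m B := by rw [← hNP]; exact hsum2
  rw [hw, ge_iff_le, ← sub_nonneg]
  have expand : (1 / (N - 1)) * (∑ B ∈ P, m B) - m A - (-(1 / 4) * ((N - 2) / (N - 1)) * ∑ j ∈ S, p j)
      = ((∑ B ∈ P, m B) - (N - 1) * m A + (1 / 4) * (N - 2) * ∑ j ∈ S, p j) / (N - 1) := by
    field_simp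
    ring
  rw [expand]
  apply div_nonneg _ hN1.le
  nlinarith [mul_nonneg (by linarith : (0:ℝ) ≤ N - 2) (by linarith : 0 ≤ (∑ j ∈ S, p j) / 2 - m A)]
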